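/- Let M and N be real m × n matrices satisfying M·Nᵀ = 0 and Mᵀ·N = 0. Then the multiset of nonzero singular values of M + N is equal to the union (with multiplicity) of the multiset of nonzero singular values of M and the multiset of nonzero singular values of N. -/
import Mathlib

open Matrix Filter

section aux

open Polynomial

/-- Characteristic polynomial is invariant under conjugation. -/
lemma aux_charpoly_conj {m : ℕ} (U A V : Matrix (Fin m) (Fin m) ℝ)
    (hUV : U * V = 1) : (U * A * V).charpoly = A.charpoly := by
  have hs : (C : ℝ →+* ℝ[X]).mapMatrix U * Matrix.scalar (Fin m) (X : ℝ[X]) *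
      (C : ℝ →+* ℝ[X]).mapMatrix V = Matrix.scalar (Fin m) (X : ℝ[X]) := by
    rw [← (scalar_commute (X : ℝ[X]) (Commute.all _) _).eq, mul_assoc, ← _root_.map_mul, hUV,
      _root_.map_one, mul_one]
  have hC : charmatrix (U * A * V) =
      (C : ℝ →+* ℝ[X]).mapMatrix U * charmatrix A * (C : ℝ →+* ℝ[X]).mapMatrix V := by
    simp only [charmatrix]
    rw [Matrix.mul_sub, Matrix.sub_mul, hs, _root_.map_mul, _root_.map_mul]
  have hdet : ((C : ℝ →+* ℝ[X]).mapMatrix U).det * ((C : ℝ →+* ℝ[X]).mapMatrix V).det = 1 := by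
    rw [← det_mul, ← _root_.map_mul, hUV, _root_.map_one, det_one]
  simp only [Matrix.charpoly]
  rw [hC, det_mul, det_mul]
  calc ((C : ℝ →+* ℝ[X]).mapMatrix U).det * (charmatrix A).det *
        ((C : ℝ →+* ℝ[X]).mapMatrix V).det
      = (charmatrix A).det * (((C : ℝ →+* ℝ[X]).mapMatrix U).det *
        ((C : ℝ →+* ℝ[X]).mapMatrix V).det) := by ring
    _ = (charmatrix A).det := by rw [hdet, mul_one]

/-- Roots of the charpoly of a real symmetric matrix are its eigenvalues. -/
lemma aux_roots_charpoly {m : ℕ} {A : Matrix (Fin m) (Fin m) ℝ} (hA : A.IsHermitian) :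
    A.charpoly.roots = Multiset.map hA.eigenvalues Finset.univ.val := by
  have hU1 : (hA.eigenvectorUnitary : Matrix (Fin m) (Fin m) ℝ) *
      star (hA.eigenvectorUnitary : Matrix (Fin m) (Fin m) ℝ) = 1 :=
    Unitary.mul_star_self_of_mem hA.eigenvectorUnitary.2
  have h1 : A.charpoly = (diagonal (RCLike.ofReal ∘ hA.eigenvalues)).charpoly := by
    conv_lhs => rw [hA.spectral_theorem]
    exact aux_charpoly_conj _ _ _ hU1
  have h2 : (diagonal (RCLike.ofReal ∘ hA.eigenvalues)).charpoly
      = ∏ i, (X - C (hA.eigenvalues i)) := by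
    rw [charpoly_of_upperTriangular _ (blockTriangular_diagonal _)]
    simp [RCLike.ofReal]
  rw [h1, h2, Finset.prod_eq_multiset_prod,
    show (fun i => X - C (hA.eigenvalues i)) = (fun a => (X : ℝ[X]) - C a) ∘ hA.eigenvalues
      from rfl,
    ← Multiset.map_map, roots_multiset_prod_X_sub_C]

/-- Key algebraic identity: if `P * Q = 0` then
`charpoly P * charpoly Q = X ^ m * charpoly (P + Q)`. -/
lemma aux_charpoly_add {m : ℕ} (P Q : Matrix (Fin m) (Fin m) ℝ) (h : P * Q = 0) :
    P.charpoly * Q.charpoly = X ^ m * (P + Q).charpoly := by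
  have hPQ : (C : ℝ →+* ℝ[X]).mapMatrix P * (C : ℝ →+* ℝ[X]).mapMatrix Q = 0 := by
    rw [← _root_.map_mul, h, _root_.map_zero]
  have hsm : ∀ B : Matrix (Fin m) (Fin m) ℝ[X],
      Matrix.scalar (Fin m) (X : ℝ[X]) * B = (X : ℝ[X]) • B := by
    intro B
    rw [scalar_apply, ← smul_eq_diagonal_mul]
  have hc : charmatrix P * charmatrix Q = (X : ℝ[X]) • charmatrix (P + Q) := by
    simp only [charmatrix, _root_.map_add]
    rw [Matrix.sub_mul, Matrix.mul_sub, Matrix.mul_sub, hPQ, sub_zero,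
      ← (scalar_commute (X : ℝ[X]) (Commute.all _)
        ((C : ℝ →+* ℝ[X]).mapMatrix P)).eq,
      hsm, hsm, hsm, smul_sub, smul_add]
    abel
  simp only [Matrix.charpoly]
  rw [← det_mul, hc, det_smul, Fintype.card_fin]

end aux

/-- The singular values of a real `m × n` matrix: square roots of the eigenvalues of `X * Xᵀ`. -/
noncomputable def sv {m n : ℕ} (X : Matrix (Fin m) (Fin n) ℝ) : Fin m → ℝ :=
  fun i => Real.sqrt ((Matrix.isHermitian_mul_conjTranspose_self X).eigenvalues i)

/-- The singular values arranged in descending order: `svSorted X 0 ≥ svSorted X 1 ≥ ⋯`. -/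
noncomputable def svSorted {m n : ℕ} (X : Matrix (Fin m) (Fin n) ℝ) : Fin m → ℝ :=
  fun i => sv X (Tuple.sort (sv X) i.rev)

/-- `P_a(X) = Σᵢ a σᵢ(X)/(a σᵢ(X) + 1)`. -/
noncomputable def Pa {m n : ℕ} (a : ℝ) (X : Matrix (Fin m) (Fin n) ℝ) : ℝ :=
  ∑ i, a * sv X i / (a * sv X i + 1)

/-- Frobenius norm. -/
noncomputable def frobNorm {m n : ℕ} (X : Matrix (Fin m) (Fin n) ℝ) : ℝ :=
  Real.sqrt (∑ i, ∑ j, (X i j) ^ 2)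

/-- Nuclear norm: the sum of the singular values. -/
noncomputable def nuclearNorm {m n : ℕ} (X : Matrix (Fin m) (Fin n) ℝ) : ℝ :=
  ∑ i, sv X i

/-- The rectangular `m × n` "diagonal" matrix with diagonal entries `σ`. -/
def diagRect {m n : ℕ} (σ : Fin m → ℝ) : Matrix (Fin m) (Fin n) ℝ :=
  Matrix.of fun i j => if (j : ℕ) = (i : ℕ) then σ i else 0

/-- The `r`-restricted isometry constant `δ_r(𝒜)`. -/
noncomputable def ripConst {m n d : ℕ}
    (A : Matrix (Fin m) (Fin n) ℝ →ₗ[ℝ] EuclideanSpace ℝ (Fin d)) (r : ℕ) : ℝ :=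
  sInf {δ : ℝ | 0 ≤ δ ∧ ∀ X : Matrix (Fin m) (Fin n) ℝ, X.rank ≤ r →
    (1 - δ) * frobNorm X ^ 2 ≤ ‖A X‖ ^ 2 ∧ ‖A X‖ ^ 2 ≤ (1 + δ) * frobNorm X ^ 2}

/-- Reduce the filtered multiset of singular values to the filtered multiset of eigenvalues. -/
lemma aux_sv_multiset {m n : ℕ} (X : Matrix (Fin m) (Fin n) ℝ) :
    (Multiset.map (sv X) Finset.univ.val).filter (· ≠ 0) =
      Multiset.map Real.sqrt
        ((Multiset.map (Matrix.isHermitian_mul_conjTranspose_self X).eigenvalues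
          Finset.univ.val).filter (· ≠ 0)) := by
  have h0 : Multiset.map (sv X) Finset.univ.val =
      Multiset.map Real.sqrt
        (Multiset.map (Matrix.isHermitian_mul_conjTranspose_self X).eigenvalues
          Finset.univ.val) := by
    rw [Multiset.map_map]; rfl
  rw [h0, Multiset.filter_map]
  congr 1
  apply Multiset.filter_congr
  intro x hx
  obtain ⟨i, _, rfl⟩ := Multiset.mem_map.mp hx
  have hnn := Matrix.eigenvalues_self_mul_conjTranspose_nonneg X i
  simp only [Function.comp_apply, ne_eq]
  rw [Real.sqrt_eq_zero hnn]

theorem statement1 (m n : ℕ) (hmn : m ≤ n) (M N : Matrix (Fin m) (Fin n) ℝ)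
    (h1 : M * Nᵀ = 0) (h2 : Mᵀ * N = 0) :
    (Multiset.map (sv (M + N)) Finset.univ.val).filter (· ≠ 0) =
      (Multiset.map (sv M) Finset.univ.val).filter (· ≠ 0) +
        (Multiset.map (sv N) Finset.univ.val).filter (· ≠ 0) := by
  classical
  set P : Matrix (Fin m) (Fin m) ℝ := M * Mᴴ with hP
  set Q : Matrix (Fin m) (Fin m) ℝ := N * Nᴴ with hQ
  have hMN : M * Nᴴ = 0 := by rw [conjTranspose_eq_transpose_of_trivial, h1]
  have hMtN : Mᴴ * N = 0 := by rw [conjTranspose_eq_transpose_of_trivial, h2]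
  have hNM : N * Mᴴ = 0 := by
    have := congrArg Matrix.conjTranspose hMN
    simpa using this
  have hPQ0 : P * Q = 0 := by
    rw [hP, hQ, Matrix.mul_assoc, ← Matrix.mul_assoc Mᴴ N Nᴴ, hMtN, Matrix.zero_mul,
      Matrix.mul_zero]
  have hsum : (M + N) * (M + N)ᴴ = P + Q := by
    rw [conjTranspose_add, Matrix.add_mul, Matrix.mul_add, Matrix.mul_add, hMN, hNM]
    rw [hP, hQ]; abel
  -- filtered roots
  have hPmonic := Matrix.charpoly_monic P
  have hQmonic := Matrix.charpoly_monic Q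
  have hSmonic := Matrix.charpoly_monic (P + Q)
  have hroots : P.charpoly.roots + Q.charpoly.roots
      = (Polynomial.X ^ m : Polynomial ℝ).roots + (P + Q).charpoly.roots := by
    rw [← Polynomial.roots_mul (mul_ne_zero hPmonic.ne_zero hQmonic.ne_zero),
      ← Polynomial.roots_mul (mul_ne_zero (pow_ne_zero m Polynomial.X_ne_zero)
        hSmonic.ne_zero), aux_charpoly_add P Q hPQ0]
  have hXroots : ((Polynomial.X ^ m : Polynomial ℝ).roots).filter (· ≠ 0) = 0 := by
    rw [Polynomial.roots_pow, Polynomial.roots_X, Multiset.nsmul_singleton]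
    rw [Multiset.filter_eq_nil]
    intro a ha
    rw [Multiset.mem_replicate] at ha
    simp [ha.2]
  have hkey : ((P + Q).charpoly.roots).filter (· ≠ 0)
      = (P.charpoly.roots).filter (· ≠ 0) + (Q.charpoly.roots).filter (· ≠ 0) := by
    have := congrArg (Multiset.filter (· ≠ 0)) hroots
    rw [Multiset.filter_add, Multiset.filter_add, hXroots, zero_add] at this
    exact this.symm
  -- convert roots to eigenvalues
  have hM' := Matrix.isHermitian_mul_conjTranspose_self M
  have hN' := Matrix.isHermitian_mul_conjTranspose_self N
  have hS' := Matrix.isHermitian_mul_conjTranspose_self (M + N)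
  have hScharpoly : ((M + N) * (M + N)ᴴ).charpoly = (P + Q).charpoly := by rw [hsum]
  have heig : (Multiset.map hS'.eigenvalues Finset.univ.val).filter (· ≠ 0)
      = (Multiset.map hM'.eigenvalues Finset.univ.val).filter (· ≠ 0) +
        (Multiset.map hN'.eigenvalues Finset.univ.val).filter (· ≠ 0) := by
    rw [← aux_roots_charpoly hS', ← aux_roots_charpoly hM', ← aux_roots_charpoly hN',
      hScharpoly]
    exact hkey
  rw [aux_sv_multiset (M + N), aux_sv_multiset M, aux_sv_multiset N, heig,
    Multiset.map_add]
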